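/- For all F = F₀ + F_v and G = G₀ + G_v in ℍ_ℂ, the determinant of the Sylvester operator S_{F,G}, regarded as a ℂ-linear endomorphism of the 4-dimensional ℂ-vector space ℍ_ℂ, equals (F₀ + G₀)⁴ + 2(F₀ + G₀)²(F_v^s + G_v^s) + (F_v^s − G_v^s)². -/

import Mathlib

open Quaternion

instance : SMulCommClass ℂ (Quaternion ℂ) (Quaternion ℂ) :=
  @Algebra.to_smulCommClass ℂ (Quaternion ℂ) _ _ _

instance : IsScalarTower ℂ (Quaternion ℂ) (Quaternion ℂ) :=
  @IsScalarTower.right ℂ (Quaternion ℂ) _ _ _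

/-- The Sylvester operator `S_{F,G}(z) = Fz + zG` as a `ℂ`-linear endomorphism of the
complex quaternions. -/
noncomputable def sylvesterOp (F G : Quaternion ℂ) : Quaternion ℂ →ₗ[ℂ] Quaternion ℂ :=
  LinearMap.mulLeft ℂ F + LinearMap.mulRight ℂ G

theorem det4aux {R : Type*} [CommRing R] (M : Matrix (Fin 4) (Fin 4) R) :
    M.det =
      M 0 0*(M 1 1*(M 2 2*M 3 3-M 2 3*M 3 2) - M 1 2*(M 2 1*M 3 3-M 2 3*M 3 1) + M 1 3*(M 2 1*M 3 2-M 2 2*M 3 1))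
      - M 0 1*(M 1 0*(M 2 2*M 3 3-M 2 3*M 3 2) - M 1 2*(M 2 0*M 3 3-M 2 3*M 3 0) + M 1 3*(M 2 0*M 3 2-M 2 2*M 3 0))
      + M 0 2*(M 1 0*(M 2 1*M 3 3-M 2 3*M 3 1) - M 1 1*(M 2 0*M 3 3-M 2 3*M 3 0) + M 1 3*(M 2 0*M 3 1-M 2 1*M 3 0))
      - M 0 3*(M 1 0*(M 2 1*M 3 2-M 2 2*M 3 1) - M 1 1*(M 2 0*M 3 2-M 2 2*M 3 0) + M 1 2*(M 2 0*M 3 1-M 2 1*M 3 0)) := by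
  have h3 : (Fin.succ 2 : Fin 4) = 3 := rfl
  rw [Matrix.det_succ_row_zero]
  simp [Fin.sum_univ_succ, Matrix.det_fin_three, Fin.succAbove,
    Fin.castSucc, Fin.castAdd, Fin.castLE, h3]
  ring

set_option maxHeartbeats 1000000 in
/-- The determinant of the Sylvester operator `S_{F,G}` equals
`(F₀+G₀)⁴ + 2(F₀+G₀)²(F_v^s + G_v^s) + (F_v^s − G_v^s)²`. -/
theorem sylvester_det (F G : Quaternion ℂ) :
    LinearMap.det (sylvesterOp F G) =
      (F.re + G.re) ^ 4 + 2 * (F.re + G.re) ^ 2 * (normSq F.im + normSq G.im) +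
        (normSq F.im - normSq G.im) ^ 2 := by
  obtain ⟨a0, a1, a2, a3⟩ := F
  obtain ⟨b0, b1, b2, b3⟩ := G
  have hS : ∀ (F G z : Quaternion ℂ), sylvesterOp F G z = F * z + z * G := fun _ _ _ => rfl
  have hM : ∀ x0 x1 x2 x3 y0 y1 y2 y3 : ℂ, ((⟨x0, x1, x2, x3⟩ : Quaternion ℂ) * ⟨y0, y1, y2, y3⟩) =
      ⟨x0*y0 - x1*y1 - x2*y2 - x3*y3, x0*y1 + x1*y0 + x2*y3 - x3*y2,
        x0*y2 - x1*y3 + x2*y0 + x3*y1, x0*y3 + x1*y2 - x2*y1 + x3*y0⟩ := by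
    intros; ext <;> simp <;> ring
  have hA : ∀ x0 x1 x2 x3 y0 y1 y2 y3 : ℂ, ((⟨x0, x1, x2, x3⟩ : Quaternion ℂ) + ⟨y0, y1, y2, y3⟩) =
      ⟨x0 + y0, x1 + y1, x2 + y2, x3 + y3⟩ := fun _ _ _ _ _ _ _ _ => rfl
  have hN : ∀ x0 x1 x2 x3 : ℂ, normSq (⟨x0, x1, x2, x3⟩ : Quaternion ℂ).im = x1 ^ 2 + x2 ^ 2 + x3 ^ 2 := by
    intros; erw [Quaternion.normSq_def']; simp [QuaternionAlgebra.im]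
  have hb0 : (QuaternionAlgebra.basisOneIJK (-1 : ℂ) 0 (-1)) 0 = (⟨1,0,0,0⟩ : Quaternion ℂ) := by
    simp [QuaternionAlgebra.basisOneIJK, Module.Basis.coe_ofEquivFun]
  have hb1 : (QuaternionAlgebra.basisOneIJK (-1 : ℂ) 0 (-1)) 1 = (⟨0,1,0,0⟩ : Quaternion ℂ) := by
    simp [QuaternionAlgebra.basisOneIJK, Module.Basis.coe_ofEquivFun]
  have hb2 : (QuaternionAlgebra.basisOneIJK (-1 : ℂ) 0 (-1)) 2 = (⟨0,0,1,0⟩ : Quaternion ℂ) := by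
    simp [QuaternionAlgebra.basisOneIJK, Module.Basis.coe_ofEquivFun]
  have hb3 : (QuaternionAlgebra.basisOneIJK (-1 : ℂ) 0 (-1)) 3 = (⟨0,0,0,1⟩ : Quaternion ℂ) := by
    simp [QuaternionAlgebra.basisOneIJK, Module.Basis.coe_ofEquivFun]
  have h00 : LinearMap.toMatrix (QuaternionAlgebra.basisOneIJK (-1 : ℂ) 0 (-1)) (QuaternionAlgebra.basisOneIJK (-1 : ℂ) 0 (-1)) (sylvesterOp ⟨a0, a1, a2, a3⟩ ⟨b0, b1, b2, b3⟩) 0 0 = a0 + b0 := by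
    erw [LinearMap.toMatrix_apply, hb0]
    erw [hS]
    erw [QuaternionAlgebra.coe_basisOneIJK_repr, hM, hM, hA]
    simp [Quaternion.re_mul]
    try ring
  have h01 : LinearMap.toMatrix (QuaternionAlgebra.basisOneIJK (-1 : ℂ) 0 (-1)) (QuaternionAlgebra.basisOneIJK (-1 : ℂ) 0 (-1)) (sylvesterOp ⟨a0, a1, a2, a3⟩ ⟨b0, b1, b2, b3⟩) 0 1 = -(a1 + b1) := by
    erw [LinearMap.toMatrix_apply, hb1]
    erw [hS]
    erw [QuaternionAlgebra.coe_basisOneIJK_repr, hM, hM, hA]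
    simp [Quaternion.re_mul]
    try ring
  have h02 : LinearMap.toMatrix (QuaternionAlgebra.basisOneIJK (-1 : ℂ) 0 (-1)) (QuaternionAlgebra.basisOneIJK (-1 : ℂ) 0 (-1)) (sylvesterOp ⟨a0, a1, a2, a3⟩ ⟨b0, b1, b2, b3⟩) 0 2 = -(a2 + b2) := by
    erw [LinearMap.toMatrix_apply, hb2]
    erw [hS]
    erw [QuaternionAlgebra.coe_basisOneIJK_repr, hM, hM, hA]
    simp [Quaternion.re_mul]
    try ring
  have h03 : LinearMap.toMatrix (QuaternionAlgebra.basisOneIJK (-1 : ℂ) 0 (-1)) (QuaternionAlgebra.basisOneIJK (-1 : ℂ) 0 (-1)) (sylvesterOp ⟨a0, a1, a2, a3⟩ ⟨b0, b1, b2, b3⟩) 0 3 = -(a3 + b3) := by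
    erw [LinearMap.toMatrix_apply, hb3]
    erw [hS]
    erw [QuaternionAlgebra.coe_basisOneIJK_repr, hM, hM, hA]
    simp [Quaternion.re_mul]
    try ring
  have h10 : LinearMap.toMatrix (QuaternionAlgebra.basisOneIJK (-1 : ℂ) 0 (-1)) (QuaternionAlgebra.basisOneIJK (-1 : ℂ) 0 (-1)) (sylvesterOp ⟨a0, a1, a2, a3⟩ ⟨b0, b1, b2, b3⟩) 1 0 = a1 + b1 := by
    erw [LinearMap.toMatrix_apply, hb0]
    erw [hS]
    erw [QuaternionAlgebra.coe_basisOneIJK_repr, hM, hM, hA]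
    simp [Quaternion.re_mul]
    try ring
  have h11 : LinearMap.toMatrix (QuaternionAlgebra.basisOneIJK (-1 : ℂ) 0 (-1)) (QuaternionAlgebra.basisOneIJK (-1 : ℂ) 0 (-1)) (sylvesterOp ⟨a0, a1, a2, a3⟩ ⟨b0, b1, b2, b3⟩) 1 1 = a0 + b0 := by
    erw [LinearMap.toMatrix_apply, hb1]
    erw [hS]
    erw [QuaternionAlgebra.coe_basisOneIJK_repr, hM, hM, hA]
    simp [Quaternion.re_mul]
    try ring
  have h12 : LinearMap.toMatrix (QuaternionAlgebra.basisOneIJK (-1 : ℂ) 0 (-1)) (QuaternionAlgebra.basisOneIJK (-1 : ℂ) 0 (-1)) (sylvesterOp ⟨a0, a1, a2, a3⟩ ⟨b0, b1, b2, b3⟩) 1 2 = -a3 + b3 := by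
    erw [LinearMap.toMatrix_apply, hb2]
    erw [hS]
    erw [QuaternionAlgebra.coe_basisOneIJK_repr, hM, hM, hA]
    simp [Quaternion.re_mul]
    try ring
  have h13 : LinearMap.toMatrix (QuaternionAlgebra.basisOneIJK (-1 : ℂ) 0 (-1)) (QuaternionAlgebra.basisOneIJK (-1 : ℂ) 0 (-1)) (sylvesterOp ⟨a0, a1, a2, a3⟩ ⟨b0, b1, b2, b3⟩) 1 3 = a2 - b2 := by
    erw [LinearMap.toMatrix_apply, hb3]
    erw [hS]
    erw [QuaternionAlgebra.coe_basisOneIJK_repr, hM, hM, hA]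
    simp [Quaternion.re_mul]
    try ring
  have h20 : LinearMap.toMatrix (QuaternionAlgebra.basisOneIJK (-1 : ℂ) 0 (-1)) (QuaternionAlgebra.basisOneIJK (-1 : ℂ) 0 (-1)) (sylvesterOp ⟨a0, a1, a2, a3⟩ ⟨b0, b1, b2, b3⟩) 2 0 = a2 + b2 := by
    erw [LinearMap.toMatrix_apply, hb0]
    erw [hS]
    erw [QuaternionAlgebra.coe_basisOneIJK_repr, hM, hM, hA]
    simp [Quaternion.re_mul]
    try ring
  have h21 : LinearMap.toMatrix (QuaternionAlgebra.basisOneIJK (-1 : ℂ) 0 (-1)) (QuaternionAlgebra.basisOneIJK (-1 : ℂ) 0 (-1)) (sylvesterOp ⟨a0, a1, a2, a3⟩ ⟨b0, b1, b2, b3⟩) 2 1 = a3 - b3 := by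
    erw [LinearMap.toMatrix_apply, hb1]
    erw [hS]
    erw [QuaternionAlgebra.coe_basisOneIJK_repr, hM, hM, hA]
    simp [Quaternion.re_mul]
    try ring
  have h22 : LinearMap.toMatrix (QuaternionAlgebra.basisOneIJK (-1 : ℂ) 0 (-1)) (QuaternionAlgebra.basisOneIJK (-1 : ℂ) 0 (-1)) (sylvesterOp ⟨a0, a1, a2, a3⟩ ⟨b0, b1, b2, b3⟩) 2 2 = a0 + b0 := by
    erw [LinearMap.toMatrix_apply, hb2]
    erw [hS]
    erw [QuaternionAlgebra.coe_basisOneIJK_repr, hM, hM, hA]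
    simp [Quaternion.re_mul]
    try ring
  have h23 : LinearMap.toMatrix (QuaternionAlgebra.basisOneIJK (-1 : ℂ) 0 (-1)) (QuaternionAlgebra.basisOneIJK (-1 : ℂ) 0 (-1)) (sylvesterOp ⟨a0, a1, a2, a3⟩ ⟨b0, b1, b2, b3⟩) 2 3 = -a1 + b1 := by
    erw [LinearMap.toMatrix_apply, hb3]
    erw [hS]
    erw [QuaternionAlgebra.coe_basisOneIJK_repr, hM, hM, hA]
    simp [Quaternion.re_mul]
    try ring
  have h30 : LinearMap.toMatrix (QuaternionAlgebra.basisOneIJK (-1 : ℂ) 0 (-1)) (QuaternionAlgebra.basisOneIJK (-1 : ℂ) 0 (-1)) (sylvesterOp ⟨a0, a1, a2, a3⟩ ⟨b0, b1, b2, b3⟩) 3 0 = a3 + b3 := by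
    erw [LinearMap.toMatrix_apply, hb0]
    erw [hS]
    erw [QuaternionAlgebra.coe_basisOneIJK_repr, hM, hM, hA]
    simp [Quaternion.re_mul]
    try ring
  have h31 : LinearMap.toMatrix (QuaternionAlgebra.basisOneIJK (-1 : ℂ) 0 (-1)) (QuaternionAlgebra.basisOneIJK (-1 : ℂ) 0 (-1)) (sylvesterOp ⟨a0, a1, a2, a3⟩ ⟨b0, b1, b2, b3⟩) 3 1 = -a2 + b2 := by
    erw [LinearMap.toMatrix_apply, hb1]
    erw [hS]
    erw [QuaternionAlgebra.coe_basisOneIJK_repr, hM, hM, hA]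
    simp [Quaternion.re_mul]
    try ring
  have h32 : LinearMap.toMatrix (QuaternionAlgebra.basisOneIJK (-1 : ℂ) 0 (-1)) (QuaternionAlgebra.basisOneIJK (-1 : ℂ) 0 (-1)) (sylvesterOp ⟨a0, a1, a2, a3⟩ ⟨b0, b1, b2, b3⟩) 3 2 = a1 - b1 := by
    erw [LinearMap.toMatrix_apply, hb2]
    erw [hS]
    erw [QuaternionAlgebra.coe_basisOneIJK_repr, hM, hM, hA]
    simp [Quaternion.re_mul]
    try ring
  have h33 : LinearMap.toMatrix (QuaternionAlgebra.basisOneIJK (-1 : ℂ) 0 (-1)) (QuaternionAlgebra.basisOneIJK (-1 : ℂ) 0 (-1)) (sylvesterOp ⟨a0, a1, a2, a3⟩ ⟨b0, b1, b2, b3⟩) 3 3 = a0 + b0 := by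
    erw [LinearMap.toMatrix_apply, hb3]
    erw [hS]
    erw [QuaternionAlgebra.coe_basisOneIJK_repr, hM, hM, hA]
    simp [Quaternion.re_mul]
    try ring
  have key : LinearMap.det (sylvesterOp (⟨a0, a1, a2, a3⟩ : Quaternion ℂ) ⟨b0, b1, b2, b3⟩) =
      (LinearMap.toMatrix (QuaternionAlgebra.basisOneIJK (-1 : ℂ) 0 (-1)) (QuaternionAlgebra.basisOneIJK (-1 : ℂ) 0 (-1))
        (sylvesterOp ⟨a0, a1, a2, a3⟩ ⟨b0, b1, b2, b3⟩)).det :=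
    (LinearMap.det_toMatrix _ _).symm
  rw [key, det4aux,
    h00, h01, h02, h03, h10, h11, h12, h13, h20, h21, h22, h23, h30, h31, h32, h33]
  erw [hN a0 a1 a2 a3, hN b0 b1 b2 b3]
  simp [Quaternion.normSq_def', Quaternion.im]
  ring
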